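/- For every MLC-formula φ there exists an ML(DD)-formula φ' such that for every model M based on the integer frame (ℤ,<) and every w ∈ ℤ: M,w ⊨ φ if and only if M,w ⊨ φ'. Together with the converse translation (which holds over all frames), this shows that ML(DD) and MLC have the same expressive power over the integer frame. -/

import Mathlib

/-- ML(DD)-formulas over propositional variables indexed by ℕ. -/
inductive MLDD : Type
  | prop : ℕ → MLDD
  | neg : MLDD → MLDD
  | or : MLDD → MLDD → MLDD
  | dia : MLDD → MLDD
  | dd : MLDD → MLDD → MLDD

/-- MLC-formulas (modal logic with counting operators ∃_{≥n}). -/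
inductive MLC : Type
  | prop : ℕ → MLC
  | neg : MLC → MLC
  | or : MLC → MLC → MLC
  | dia : MLC → MLC
  | count : ℕ → MLC → MLC

/-- A Kripke model. -/
structure Model where
  W : Type
  ne : Nonempty W
  R : W → W → Prop
  V : ℕ → W → Prop

/-- Satisfaction relation for ML(DD). -/
def sat (M : Model) : M.W → MLDD → Prop
  | w, .prop p => M.V p w
  | w, .neg φ => ¬ sat M w φ
  | w, .or φ ψ => sat M w φ ∨ sat M w ψ
  | w, .dia φ => ∃ v, M.R w v ∧ sat M v φ
  | _, .dd φ ψ => ∃ v, sat M v φ ∧ sat M v ψ ∧ ∀ v', v' ≠ v → ¬ sat M v' φ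

/-- Satisfaction relation for MLC: `∃_{≥n} φ` holds iff at least `n` distinct worlds
satisfy `φ`. -/
def satC (M : Model) : M.W → MLC → Prop
  | w, .prop p => M.V p w
  | w, .neg φ => ¬ satC M w φ
  | w, .or φ ψ => satC M w φ ∨ satC M w ψ
  | w, .dia φ => ∃ v, M.R w v ∧ satC M v φ
  | _, .count n φ => ∃ f : Fin n → M.W, Function.Injective f ∧ ∀ k, satC M (f k) φ

/-- The model based on the integer frame (ℤ,<) with valuation `V`. -/
def zModel (V : ℕ → ℤ → Prop) : Model where
  W := ℤ
  ne := ⟨0⟩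
  R := fun w v => w < v
  V := V

/-! ### Auxiliary definitions -/

def mtop : MLDD := .or (.prop 0) (.neg (.prop 0))

def mand (a b : MLDD) : MLDD := .neg (.or (.neg a) (.neg b))

def cand (a b : MLC) : MLC := .neg (.or (.neg a) (.neg b))

/-- chain n χ : there is an increasing chain of n χ-points starting here. -/
def chain : ℕ → MLDD → MLDD
  | 0, _ => mtop
  | n+1, χ => mand χ (.dia (chain n χ))

/-- Global existential modality encoded with DD, valid over (ℤ,<). -/
def Edd (χ : MLDD) : MLDD := .or (.dia χ) (.dd (mand χ (.neg (.dia χ))) mtop)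

/-- Semantic chain predicate. -/
def chainSat (P : ℤ → Prop) : ℕ → ℤ → Prop
  | 0, _ => True
  | n+1, w => P w ∧ ∃ v, w < v ∧ chainSat P n v

lemma zR (V : ℕ → ℤ → Prop) : (zModel V).R = fun a b : ℤ => a < b := rfl

lemma sat_mtop (V : ℕ → ℤ → Prop) (w : ℤ) : sat (zModel V) w mtop := by
  simp only [mtop, sat]
  exact Classical.em _

lemma sat_mand (V : ℕ → ℤ → Prop) (w : ℤ) (a b : MLDD) :
    sat (zModel V) w (mand a b) ↔ sat (zModel V) w a ∧ sat (zModel V) w b := by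
  simp [mand, sat]

lemma satC_cand (V : ℕ → ℤ → Prop) (w : ℤ) (a b : MLC) :
    satC (zModel V) w (cand a b) ↔ satC (zModel V) w a ∧ satC (zModel V) w b := by
  simp [cand, satC]

lemma sat_chain (V : ℕ → ℤ → Prop) (χ : MLDD) :
    ∀ (n : ℕ) (w : ℤ), sat (zModel V) w (chain n χ) ↔
      chainSat (fun v => sat (zModel V) v χ) n w := by
  intro n
  induction n with
  | zero => intro w; simp [chain, chainSat, sat_mtop]
  | succ n ih =>
    intro w
    rw [show chain (n+1) χ = mand χ (.dia (chain n χ)) from rfl, sat_mand]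
    show _ ∧ (∃ v : ℤ, w < v ∧ sat (zModel V) v (chain n χ)) ↔ _
    simp only [chainSat]
    constructor
    · rintro ⟨h1, v, hv, h2⟩; exact ⟨h1, v, hv, (ih v).1 h2⟩
    · rintro ⟨h1, v, hv, h2⟩; exact ⟨h1, v, hv, (ih v).2 h2⟩

lemma chainSat_of_finset (P : ℤ → Prop) :
    ∀ (n : ℕ) (s : Finset ℤ), s.card = n → (∀ x ∈ s, P x) →
      ∀ b : ℤ, (∀ x ∈ s, b < x) → ∃ w, b < w ∧ chainSat P n w := by
  intro n
  induction n with
  | zero => intro s _ _ b _; exact ⟨b + 1, by omega, trivial⟩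
  | succ n ih =>
    intro s hcard hP b hb
    have hne : s.Nonempty := by
      rw [← Finset.card_pos, hcard]; omega
    set m := s.min' hne with hm
    have hmem : m ∈ s := s.min'_mem hne
    have hcard' : (s.erase m).card = n := by
      rw [Finset.card_erase_of_mem hmem, hcard]; omega
    have hP' : ∀ x ∈ s.erase m, P x := fun x hx => hP x (Finset.mem_of_mem_erase hx)
    have hgt : ∀ x ∈ s.erase m, m < x := by
      intro x hx
      have h1 := Finset.ne_of_mem_erase hx
      have h2 := s.min'_le x (Finset.mem_of_mem_erase hx)
      omega
    obtain ⟨w, hw1, hw2⟩ := ih (s.erase m) hcard' hP' m hgt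
    exact ⟨m, hb m hmem, hP m hmem, w, hw1, hw2⟩

lemma finset_of_chainSat (P : ℤ → Prop) :
    ∀ (n : ℕ) (w : ℤ), chainSat P n w →
      ∃ f : Fin n → ℤ, Function.Injective f ∧ (∀ k, P (f k)) ∧ ∀ k, w ≤ f k := by
  intro n
  induction n with
  | zero =>
    intro w _
    exact ⟨fun k => k.elim0, fun k => k.elim0, fun k => k.elim0, fun k => k.elim0⟩
  | succ n ih =>
    intro w h
    obtain ⟨hPw, v, hwv, hcs⟩ := h
    obtain ⟨g, hginj, hgP, hgle⟩ := ih v hcs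
    refine ⟨Fin.cons w g, ?_, ?_, ?_⟩
    · intro i j hij
      rcases Fin.eq_zero_or_eq_succ i with hi | ⟨i', rfl⟩ <;>
        rcases Fin.eq_zero_or_eq_succ j with hj | ⟨j', rfl⟩
      · rw [hi, hj]
      · subst hi
        simp only [Fin.cons_zero, Fin.cons_succ] at hij
        have := hgle j'; omega
      · subst hj
        simp only [Fin.cons_zero, Fin.cons_succ] at hij
        have := hgle i'; omega
      · simp only [Fin.cons_succ] at hij
        exact congrArg Fin.succ (hginj hij)
    · intro k
      rcases Fin.eq_zero_or_eq_succ k with hk | ⟨k', rfl⟩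
      · rw [hk]; simpa using hPw
      · simpa using hgP k'
    · intro k
      rcases Fin.eq_zero_or_eq_succ k with hk | ⟨k', rfl⟩
      · rw [hk]; simp
      · simp only [Fin.cons_succ]
        have := hgle k'; omega

/-- n injective points satisfying P iff a chain of length n exists somewhere. -/
lemma count_iff_chain (P : ℤ → Prop) (n : ℕ) :
    (∃ f : Fin n → ℤ, Function.Injective f ∧ ∀ k, P (f k)) ↔
      ∃ w : ℤ, chainSat P n w := by
  constructor
  · rintro ⟨f, hinj, hP⟩
    classical
    set s : Finset ℤ := Finset.image f Finset.univ with hs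
    have hcard : s.card = n := by
      rw [hs, Finset.card_image_of_injective _ hinj, Finset.card_univ, Fintype.card_fin]
    have hPs : ∀ x ∈ s, P x := by
      intro x hx
      rw [hs, Finset.mem_image] at hx
      obtain ⟨k, _, rfl⟩ := hx
      exact hP k
    have hbd : ∃ b : ℤ, ∀ x ∈ s, b < x := by
      by_cases hne : s.Nonempty
      · exact ⟨s.min' hne - 1, fun x hx => by have := s.min'_le x hx; omega⟩
      · exact ⟨0, fun x hx => absurd ⟨x, hx⟩ hne⟩
    obtain ⟨b, hb⟩ := hbd
    obtain ⟨w, _, hw⟩ := chainSat_of_finset P n s hcard hPs b hb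
    exact ⟨w, hw⟩
  · rintro ⟨w, hw⟩
    obtain ⟨f, hinj, hP, _⟩ := finset_of_chainSat P n w hw
    exact ⟨f, hinj, hP⟩

/-- The DD-encoded global modality is correct over (ℤ,<). -/
lemma sat_Edd (V : ℕ → ℤ → Prop) (χ : MLDD) (w : ℤ) :
    sat (zModel V) w (Edd χ) ↔ ∃ v : ℤ, sat (zModel V) v χ := by
  constructor
  · intro h
    rcases h with ⟨v, _, hv⟩ | ⟨v, hv, _, _⟩
    · exact ⟨v, hv⟩
    · exact ⟨v, ((sat_mand V v χ _).1 hv).1⟩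
  · rintro ⟨v, hv⟩
    by_cases hbdd : ∃ b : ℤ, ∀ z : ℤ, sat (zModel V) z χ → z ≤ b
    · right
      obtain ⟨g, hg, hmax⟩ := Int.exists_greatest_of_bdd hbdd ⟨v, hv⟩
      refine ⟨g, ?_, sat_mtop V g, ?_⟩
      · rw [sat_mand]
        refine ⟨hg, ?_⟩
        rintro ⟨u, hgu, hu⟩
        have h1 := hmax u hu
        have h2 : g < u := hgu
        omega
      · intro v' hne hv'
        rw [sat_mand V v'] at hv'
        obtain ⟨hv'1, hv'2⟩ := hv'
        have hle := hmax v' hv'1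
        have hlt := hle.lt_of_ne hne
        exact hv'2 ⟨g, hlt, hg⟩
    · left
      push_neg at hbdd
      obtain ⟨z, hz1, hz2⟩ := hbdd w
      exact ⟨z, hz2, hz1⟩

/-- Translation MLC → MLDD. -/
def T : MLC → MLDD
  | .prop p => .prop p
  | .neg φ => .neg (T φ)
  | .or φ ψ => .or (T φ) (T ψ)
  | .dia φ => .dia (T φ)
  | .count n φ => Edd (chain n (T φ))

lemma T_correct (φ : MLC) : ∀ (V : ℕ → ℤ → Prop) (w : ℤ),
    satC (zModel V) w φ ↔ sat (zModel V) w (T φ) := by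
  induction φ with
  | prop p => intro V w; simp [T, sat, satC]
  | neg φ ih => intro V w; simp [T, sat, satC, ih]
  | or φ ψ ih1 ih2 => intro V w; simp [T, sat, satC, ih1, ih2]
  | dia φ ih =>
    intro V w
    simp only [T, sat, satC]
    constructor
    · rintro ⟨v, hv, h⟩; exact ⟨v, hv, (ih V v).1 h⟩
    · rintro ⟨v, hv, h⟩; exact ⟨v, hv, (ih V v).2 h⟩
  | count n φ ih =>
    intro V w
    have h1 : satC (zModel V) w (.count n φ) ↔
        ∃ f : Fin n → ℤ, Function.Injective f ∧ ∀ k, sat (zModel V) (f k) (T φ) := by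
      simp only [satC]
      constructor
      · rintro ⟨f, hinj, hf⟩; exact ⟨f, hinj, fun k => (ih V (f k)).1 (hf k)⟩
      · rintro ⟨f, hinj, hf⟩; exact ⟨f, hinj, fun k => (ih V (f k)).2 (hf k)⟩
    have h2 := count_iff_chain (fun v => sat (zModel V) v (T φ)) n
    have h3 : (∃ w : ℤ, chainSat (fun v => sat (zModel V) v (T φ)) n w) ↔
        sat (zModel V) w (T (.count n φ)) := by
      rw [show T (.count n φ) = Edd (chain n (T φ)) from rfl, sat_Edd]
      constructor
      · rintro ⟨v, hv⟩; exact ⟨v, (sat_chain V (T φ) n v).2 hv⟩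
      · rintro ⟨v, hv⟩; exact ⟨v, (sat_chain V (T φ) n v).1 hv⟩
    exact h1.trans (h2.trans h3)

/-- Translation MLDD → MLC. -/
def S : MLDD → MLC
  | .prop p => .prop p
  | .neg φ => .neg (S φ)
  | .or φ ψ => .or (S φ) (S ψ)
  | .dia φ => .dia (S φ)
  | .dd φ ψ => cand (.count 1 (cand (S φ) (S ψ))) (.neg (.count 2 (S φ)))

lemma S_correct (φ : MLDD) : ∀ (V : ℕ → ℤ → Prop) (w : ℤ),
    sat (zModel V) w φ ↔ satC (zModel V) w (S φ) := by
  induction φ with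
  | prop p => intro V w; simp [S, sat, satC]
  | neg φ ih => intro V w; simp [S, sat, satC, ih]
  | or φ ψ ih1 ih2 => intro V w; simp [S, sat, satC, ih1, ih2]
  | dia φ ih =>
    intro V w
    simp only [S, sat, satC]
    constructor
    · rintro ⟨v, hv, h⟩; exact ⟨v, hv, (ih V v).1 h⟩
    · rintro ⟨v, hv, h⟩; exact ⟨v, hv, (ih V v).2 h⟩
  | dd φ ψ ih1 ih2 =>
    intro V w
    rw [show S (.dd φ ψ) = cand (.count 1 (cand (S φ) (S ψ))) (.neg (.count 2 (S φ)))
      from rfl, satC_cand]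
    constructor
    · rintro ⟨v, hφ, hψ, huniq⟩
      constructor
      · refine ⟨fun _ => v, fun a b _ => Subsingleton.elim a b, fun k => ?_⟩
        refine (satC_cand V v _ _).2 ?_
        exact ⟨(ih1 V v).1 hφ, (ih2 V v).1 hψ⟩
      · show ¬ _
        simp only [satC]
        rintro ⟨f, hinj, hf⟩
        have hne : f 0 ≠ f 1 := fun h => absurd (hinj h) (by decide)
        rcases ne_or_eq (f 0) v with h0 | h0
        · exact huniq (f 0) h0 ((ih1 V (f 0)).2 (hf 0))
        · exact huniq (f 1) (h0 ▸ hne.symm) ((ih1 V (f 1)).2 (hf 1))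
    · rintro ⟨⟨f, _, hf⟩, hno2⟩
      have hv := hf 0
      rw [satC_cand V (f 0)] at hv
      refine ⟨f 0, (ih1 V (f 0)).2 hv.1, (ih2 V (f 0)).2 hv.2, ?_⟩
      intro v' hne hv'
      apply hno2
      show satC _ _ (.count 2 (S φ))
      refine ⟨![f 0, v'], ?_, ?_⟩
      · intro a b hab
        fin_cases a <;> fin_cases b <;>
          simp only [Matrix.cons_val_zero, Matrix.cons_val_one, Matrix.head_cons] at hab ⊢ <;>
          first
            | rfl
            | exact absurd hab.symm hne
            | exact absurd hab hne
      · intro k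
        fin_cases k
        · simpa using hv.1
        · simpa using (ih1 V v').1 hv'

/-- Over the integer frame (ℤ,<), every MLC-formula has an equivalent ML(DD)-formula;
together with the converse translation (which holds over all frames, hence in particular
over (ℤ,<)), ML(DD) and MLC have the same expressive power over the integer frame. -/
theorem mlc_equals_mldd_over_int :
    (∀ φ : MLC, ∃ φ' : MLDD, ∀ (V : ℕ → ℤ → Prop) (w : ℤ),
      satC (zModel V) w φ ↔ sat (zModel V) w φ') ∧
    (∀ φ' : MLDD, ∃ φ : MLC, ∀ (V : ℕ → ℤ → Prop) (w : ℤ),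
      sat (zModel V) w φ' ↔ satC (zModel V) w φ) := by
  exact ⟨fun φ => ⟨T φ, T_correct φ⟩, fun φ' => ⟨S φ', S_correct φ'⟩⟩
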